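/- Suppose v : {(ξ,η) : 0 ≤ ξ ≤ η} → ℝ satisfies |v(ξ,η)| ≤ Σ_{n=0}^∞ (M^{n+1}/4^{n+1}) (ξ^n/n!)((η+n+1)^{n+1}/(n+1)!) for some M ≥ 0. Then for any κ > 0, |v(ξ,η)| ≤ (Mη/4) e^{ξMκ/2} e^{η/κ} + (Me/(4√(2π))) e^{ξ e M/2}. -/

import Mathlib

lemma aux_pow_div_fact_le_exp (x : ℝ) (hx : 0 ≤ x) (n : ℕ) :
    x ^ n / n.factorial ≤ Real.exp x := by
  calc x ^ n / n.factorial ≤ ∑ i ∈ Finset.range (n+1), x ^ i / i.factorial := by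
        refine Finset.single_le_sum (f := fun i => x ^ i / (i.factorial : ℝ)) ?_ ?_
        · intro i _; positivity
        · simp
    _ ≤ Real.exp x := Real.sum_le_exp_of_nonneg hx _

lemma aux_tsum_exp (x : ℝ) : ∑' n : ℕ, x ^ n / n.factorial = Real.exp x := by
  rw [Real.exp_eq_exp_ℝ, NormedSpace.exp_eq_tsum_div]

lemma aux_add_pow (a b : ℝ) (ha : 0 ≤ a) (hb : 0 ≤ b) (n : ℕ) :
    (a + b) ^ (n + 1) ≤ 2 ^ n * (a ^ (n + 1) + b ^ (n + 1)) := by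
  have h := (convexOn_pow (n+1)).2 (Set.mem_Ici.2 ha) (Set.mem_Ici.2 hb)
    (by norm_num : (0:ℝ) ≤ 1/2) (by norm_num : (0:ℝ) ≤ 1/2) (by norm_num)
  simp only [smul_eq_mul] at h
  have h2 : (a + b) ^ (n + 1) = 2 ^ (n+1) * (1/2*a + 1/2*b) ^ (n + 1) := by
    rw [← mul_pow]; ring_nf
  rw [h2]
  calc 2 ^ (n+1) * (1/2*a + 1/2*b) ^ (n + 1)
      ≤ 2 ^ (n+1) * (1/2 * a^(n+1) + 1/2 * b^(n+1)) := by gcongr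
    _ = 2 ^ n * (a ^ (n + 1) + b ^ (n + 1)) := by rw [pow_succ]; ring

lemma aux_stirling (n : ℕ) :
    ((n : ℝ) + 1) ^ (n + 1) / (n + 1).factorial ≤
      Real.exp 1 ^ (n + 1) / Real.sqrt (2 * Real.pi) := by
  have hs : Real.sqrt Real.pi ≤ Stirling.stirlingSeq (n + 1) := by
    have ht : Filter.Tendsto (Stirling.stirlingSeq ∘ Nat.succ) Filter.atTop
        (nhds (Real.sqrt Real.pi)) :=
      Stirling.tendsto_stirlingSeq_sqrt_pi.comp (Filter.tendsto_add_atTop_nat 1)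
    exact Stirling.stirlingSeq'_antitone.le_of_tendsto ht n
  set m := n + 1
  have hc : (1:ℝ) ≤ (m:ℝ) := by exact_mod_cast Nat.one_le_iff_ne_zero.2 (by omega)
  have hcpos : (0:ℝ) < (m:ℝ) := by linarith
  have he : (0:ℝ) < Real.exp 1 := Real.exp_pos 1
  have hd : (0:ℝ) < Real.sqrt (2 * m) * ((m : ℝ) / Real.exp 1) ^ m := by positivity
  have hfac : Real.sqrt Real.pi * (Real.sqrt (2 * m) * ((m:ℝ) / Real.exp 1) ^ m)
      ≤ (m.factorial : ℝ) := by
    have := (le_div_iff₀ hd).mp hs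
    simpa [Stirling.stirlingSeq] using this
  have hsq : Real.sqrt (2 * Real.pi) ≤ Real.sqrt Real.pi * Real.sqrt (2 * m) := by
    rw [show (2:ℝ) * Real.pi = Real.pi * 2 by ring, ← Real.sqrt_mul Real.pi_pos.le]
    apply Real.sqrt_le_sqrt
    nlinarith [Real.pi_pos]
  have key : Real.sqrt (2 * Real.pi) * ((m:ℝ)) ^ m ≤ Real.exp 1 ^ m * m.factorial := by
    have h1 : Real.sqrt (2 * Real.pi) * ((m:ℝ)) ^ m ≤
        Real.sqrt Real.pi * Real.sqrt (2 * m) * ((m:ℝ)) ^ m := by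
      gcongr
    have h2 : Real.sqrt Real.pi * Real.sqrt (2 * m) * ((m:ℝ)) ^ m =
        Real.sqrt Real.pi * (Real.sqrt (2 * m) * ((m:ℝ) / Real.exp 1) ^ m) * Real.exp 1 ^ m := by
      rw [div_pow]; field_simp
    calc Real.sqrt (2 * Real.pi) * ((m:ℝ)) ^ m
        ≤ Real.sqrt Real.pi * Real.sqrt (2 * m) * ((m:ℝ)) ^ m := h1
      _ = Real.sqrt Real.pi * (Real.sqrt (2 * m) * ((m:ℝ) / Real.exp 1) ^ m)
            * Real.exp 1 ^ m := h2
      _ ≤ (m.factorial : ℝ) * Real.exp 1 ^ m := by gcongr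
      _ = Real.exp 1 ^ m * m.factorial := by ring
  have hm : ((n : ℝ) + 1) = (m : ℝ) := by push_cast [m]; ring
  rw [hm, div_le_div_iff₀ (by positivity) (by positivity)]
  nlinarith [key]
theorem goursat_kernel_estimate (M : ℝ) (hM : 0 ≤ M) (v : ℝ → ℝ → ℝ)
    (hv : ∀ ξ η : ℝ, 0 ≤ ξ → ξ ≤ η →
      |v ξ η| ≤ ∑' n : ℕ, M ^ (n + 1) / 4 ^ (n + 1) * (ξ ^ n / n.factorial) *
        ((η + n + 1) ^ (n + 1) / (n + 1).factorial)) :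
    ∀ κ : ℝ, 0 < κ → ∀ ξ η : ℝ, 0 ≤ ξ → ξ ≤ η →
      |v ξ η| ≤ M * η / 4 * Real.exp (ξ * M * κ / 2) * Real.exp (η / κ) +
        M * Real.exp 1 / (4 * Real.sqrt (2 * Real.pi)) *
          Real.exp (ξ * Real.exp 1 * M / 2) := by
  intro κ hκ ξ η hξ hξη
  have hη : 0 ≤ η := hξ.trans hξη
  set A : ℝ := M * η / 4 * Real.exp (η / κ) with hA
  set K : ℝ := M * Real.exp 1 / (4 * Real.sqrt (2 * Real.pi)) with hK
  set x1 : ℝ := ξ * M * κ / 2 with hx1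
  set x2 : ℝ := ξ * Real.exp 1 * M / 2 with hx2
  have hx1n : 0 ≤ x1 := by positivity
  have hx2n : 0 ≤ x2 := by have := (Real.exp_pos 1).le; positivity
  have hA0 : 0 ≤ A := by positivity
  have hK0 : 0 ≤ K := by
    have h1 := (Real.exp_pos 1).le
    have h2 := Real.sqrt_nonneg (2 * Real.pi)
    positivity
  set f : ℕ → ℝ := fun n => M ^ (n + 1) / 4 ^ (n + 1) * (ξ ^ n / n.factorial) *
        ((η + n + 1) ^ (n + 1) / (n + 1).factorial) with hf
  set g : ℕ → ℝ := fun n => A * (x1 ^ n / n.factorial) + K * (x2 ^ n / n.factorial) with hg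
  have hf0 : ∀ n, 0 ≤ f n := by
    intro n
    have h1 : (0:ℝ) ≤ η + n + 1 := by positivity
    positivity
  have hle : ∀ n, f n ≤ g n := by
    intro n
    have hfacpos : (0:ℝ) < n.factorial := by exact_mod_cast n.factorial_pos
    have hfacpos' : (0:ℝ) < (n+1).factorial := by exact_mod_cast (n+1).factorial_pos
    have hfacle : (n.factorial : ℝ) ≤ ((n+1).factorial : ℝ) := by
      exact_mod_cast Nat.factorial_le (Nat.le_succ n)
    have step1 : f n ≤ M ^ (n + 1) / 4 ^ (n + 1) * (ξ ^ n / n.factorial) *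
        ((2 ^ n * (η ^ (n+1) + ((n:ℝ)+1) ^ (n+1))) / (n + 1).factorial) := by
      have := aux_add_pow η ((n:ℝ)+1) hη (by positivity) n
      have hrw : η + (n:ℝ) + 1 = η + ((n:ℝ)+1) := by ring
      rw [hf]
      dsimp only
      rw [hrw]
      gcongr
    have split : M ^ (n + 1) / 4 ^ (n + 1) * (ξ ^ n / n.factorial) *
        ((2 ^ n * (η ^ (n+1) + ((n:ℝ)+1) ^ (n+1))) / (n + 1).factorial)
        = M ^ (n + 1) / 4 ^ (n + 1) * (ξ ^ n / n.factorial) *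
            (2 ^ n * η ^ (n+1) / (n + 1).factorial)
          + M ^ (n + 1) / 4 ^ (n + 1) * (ξ ^ n / n.factorial) *
            (2 ^ n * ((n:ℝ)+1) ^ (n+1) / (n + 1).factorial) := by ring
    have hP : M ^ (n + 1) / 4 ^ (n + 1) * (ξ ^ n / n.factorial) *
        (2 ^ n * η ^ (n+1) / (n + 1).factorial) ≤ A * (x1 ^ n / n.factorial) := by
      have s1 : M ^ (n + 1) / 4 ^ (n + 1) * (ξ ^ n / n.factorial) *
          (2 ^ n * η ^ (n+1) / (n + 1).factorial) ≤
          M ^ (n + 1) / 4 ^ (n + 1) * (ξ ^ n / n.factorial) *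
          (2 ^ n * η ^ (n+1) / n.factorial) := by gcongr
      have s2 : M ^ (n + 1) / 4 ^ (n + 1) * (ξ ^ n / n.factorial) *
          (2 ^ n * η ^ (n+1) / n.factorial) =
          (M * η / 4) * (x1 ^ n / n.factorial) * ((η/κ) ^ n / n.factorial) := by
        have h4 : ((4:ℝ)) ^ (n+1) = 2 ^ (n+1) * 2 ^ (n+1) := by
          rw [← mul_pow]; norm_num
        rw [hx1, h4]
        field_simp
        have hk : κ ^ n * κ⁻¹ ^ n = 1 := by rw [← mul_pow, mul_inv_cancel₀ hκ.ne', one_pow]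
        have h2 : ((1:ℝ) / 2) ^ n * 2 ^ (n * 2) = 2 ^ n := by
          rw [mul_comm n 2, pow_mul, ← mul_pow]; norm_num
        linear_combination (-(M * M ^ n * ξ ^ n * η * η ^ n * 4 * (((1:ℝ) / 2) ^ n * 2 ^ (n * 2))))
          * hk - (M * M ^ n * ξ ^ n * η * η ^ n * 4) * h2
      have s3 : (M * η / 4) * (x1 ^ n / n.factorial) * ((η/κ) ^ n / n.factorial) ≤
          (M * η / 4) * (x1 ^ n / n.factorial) * Real.exp (η/κ) := by
        exact mul_le_mul_of_nonneg_left
          (aux_pow_div_fact_le_exp _ (by positivity) n) (by positivity)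
      have s4 : (M * η / 4) * (x1 ^ n / n.factorial) * Real.exp (η/κ) =
          A * (x1 ^ n / n.factorial) := by rw [hA]; ring
      linarith
    have hQ : M ^ (n + 1) / 4 ^ (n + 1) * (ξ ^ n / n.factorial) *
        (2 ^ n * ((n:ℝ)+1) ^ (n+1) / (n + 1).factorial) ≤ K * (x2 ^ n / n.factorial) := by
      have s1 : M ^ (n + 1) / 4 ^ (n + 1) * (ξ ^ n / n.factorial) *
          (2 ^ n * ((n:ℝ)+1) ^ (n+1) / (n + 1).factorial) =
          (M ^ (n + 1) * 2 ^ n / 4 ^ (n + 1) * (ξ ^ n / n.factorial)) *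
          (((n:ℝ)+1) ^ (n+1) / (n + 1).factorial) := by ring
      have s2 : (M ^ (n + 1) * 2 ^ n / 4 ^ (n + 1) * (ξ ^ n / n.factorial)) *
          (((n:ℝ)+1) ^ (n+1) / (n + 1).factorial) ≤
          (M ^ (n + 1) * 2 ^ n / 4 ^ (n + 1) * (ξ ^ n / n.factorial)) *
          (Real.exp 1 ^ (n+1) / Real.sqrt (2 * Real.pi)) := by
        exact mul_le_mul_of_nonneg_left (aux_stirling n) (by positivity)
      have s3 : (M ^ (n + 1) * 2 ^ n / 4 ^ (n + 1) * (ξ ^ n / n.factorial)) *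
          (Real.exp 1 ^ (n+1) / Real.sqrt (2 * Real.pi)) =
          K * (x2 ^ n / n.factorial) := by
        have hsq : (0:ℝ) < Real.sqrt (2 * Real.pi) := Real.sqrt_pos.2 (by positivity)
        have h4 : ((4:ℝ)) ^ (n+1) = 2 ^ (n+1) * 2 ^ (n+1) := by
          rw [← mul_pow]; norm_num
        rw [hK, hx2, h4]
        generalize Real.exp 1 = E
        field_simp
        have h2 : ((1:ℝ) / 2) ^ n * 2 ^ (n * 2) = 2 ^ n := by
          rw [mul_comm n 2, pow_mul, ← mul_pow]; norm_num
        linear_combination (-(M * M ^ n * ξ ^ n * E * E ^ n * 4)) * h2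
      linarith
    calc f n ≤ _ := step1
      _ = _ := split
      _ ≤ g n := by rw [hg]; exact add_le_add hP hQ
  have hsum1 : Summable (fun n : ℕ => A * (x1 ^ n / n.factorial)) :=
    (Real.summable_pow_div_factorial x1).mul_left A
  have hsum2 : Summable (fun n : ℕ => K * (x2 ^ n / n.factorial)) :=
    (Real.summable_pow_div_factorial x2).mul_left K
  have hgsum : Summable g := hsum1.add hsum2
  have hfsum : Summable f := Summable.of_nonneg_of_le hf0 hle hgsum
  have htg : ∑' n, g n = A * Real.exp x1 + K * Real.exp x2 := by
    rw [hg, Summable.tsum_add hsum1 hsum2, tsum_mul_left, tsum_mul_left, aux_tsum_exp, aux_tsum_exp]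
  calc |v ξ η| ≤ ∑' n, f n := hv ξ η hξ hξη
    _ ≤ ∑' n, g n := Summable.tsum_le_tsum hle hfsum hgsum
    _ = A * Real.exp x1 + K * Real.exp x2 := htg
    _ = M * η / 4 * Real.exp (ξ * M * κ / 2) * Real.exp (η / κ) +
        M * Real.exp 1 / (4 * Real.sqrt (2 * Real.pi)) *
          Real.exp (ξ * Real.exp 1 * M / 2) := by rw [hA, hK, hx1, hx2]; ring
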